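/- On the interval (0, π/(2·√2)), the functions f̃1(t) = −(1/√2)·cos(√2·t), f̃2(t) = −(1/16)·(4 − 9·cos²(√2·t))·sin(√2·t), f̃3(t) = (1/16)·cos²(√2·t)·sin(√2·t), F̃(t) = (3/16)·cos²(√2·t)·sin(√2·t) solve system (F) with μ = 2 and satisfy the constraint (C) at every point; moreover f̃1(0)²/2 = 1/4. (These are the coefficient functions of the round-sphere nearly Kähler structure on S⁶, rescaled so that μ = 2 and reparametrized by a unit-speed normal geodesic emanating from the singular SU(2)×SU(2)-orbit S³.) -/

import Mathlib

/-- Podestà–Spiro: the rescaled and reparametrized coefficient functions of the round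
nearly Kähler `S⁶` (normalized so that `μ = 2`, with a unit-speed normal geodesic
emanating from the singular orbit `S³`) solve system (F) with `μ = 2` and satisfy the
constraint (C) on `(0, π/(2√2))`; moreover `f̃1(0)²/2 = 1/4`. -/
theorem stmt_9
    (μ : ℝ) (hμ : μ = 2)
    (f1 f2 f3 F : ℝ → ℝ)
    (hf1 : ∀ t, f1 t = -(1 / Real.sqrt 2) * Real.cos (Real.sqrt 2 * t))
    (hf2 : ∀ t, f2 t =
      -(1 / 16) * (4 - 9 * Real.cos (Real.sqrt 2 * t) ^ 2) * Real.sin (Real.sqrt 2 * t))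
    (hf3 : ∀ t, f3 t =
      (1 / 16) * Real.cos (Real.sqrt 2 * t) ^ 2 * Real.sin (Real.sqrt 2 * t))
    (hF : ∀ t, F t =
      (3 / 16) * Real.cos (Real.sqrt 2 * t) ^ 2 * Real.sin (Real.sqrt 2 * t)) :
    (∀ t ∈ Set.Ioo 0 (Real.pi / (2 * Real.sqrt 2)),
      (deriv (fun u => (deriv f2 u + f1 u / 4) * f1 u) t + 12 * μ * f1 t * f2 t = 0 ∧
       deriv (fun u => (deriv f3 u - f1 u / 4) * f1 u) t + 12 * μ * f1 t * f3 t = 0 ∧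
       deriv (fun u => deriv F u * f1 u) t - 4 * F t / f1 t + 12 * μ * f1 t * F t = 0 ∧
       f1 t * (deriv f2 t - deriv f3 t + f1 t / 2) + 48 * μ * (f2 t * f3 t - F t ^ 2) = 0) ∧
      4 * F t ^ 2 -
        ((deriv F t) ^ 2 - (deriv f2 t + f1 t / 4) * (deriv f3 t - f1 t / 4)) * f1 t ^ 2 = 0) ∧
    f1 0 ^ 2 / 2 = 1 / 4 := by
  have hs2 : Real.sqrt 2 ^ 2 = 2 := Real.sq_sqrt (by norm_num)
  have hs0 : Real.sqrt 2 ≠ 0 := by positivity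
  have h12 : (1:ℝ) / Real.sqrt 2 = Real.sqrt 2 / 2 := by
    rw [div_eq_div_iff hs0 two_ne_zero, one_mul]
    exact (Real.mul_self_sqrt (by norm_num)).symm
  have hpy : ∀ x : ℝ, Real.sin x ^ 2 + Real.cos x ^ 2 = 1 := Real.sin_sq_add_cos_sq
  have hc : ∀ t : ℝ, HasDerivAt (fun u => Real.cos (Real.sqrt 2 * u))
      (-Real.sin (Real.sqrt 2 * t) * Real.sqrt 2) t := by
    intro t
    have h := ((hasDerivAt_id t).const_mul (Real.sqrt 2)).cos
    simpa using h
  have hn : ∀ t : ℝ, HasDerivAt (fun u => Real.sin (Real.sqrt 2 * u))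
      (Real.cos (Real.sqrt 2 * t) * Real.sqrt 2) t := by
    intro t
    have h := ((hasDerivAt_id t).const_mul (Real.sqrt 2)).sin
    simpa using h
  -- derivative of f2
  have hd2 : ∀ t : ℝ, HasDerivAt f2
      (-(Real.sqrt 2 * (22 * Real.cos (Real.sqrt 2 * t) - 27 * Real.cos (Real.sqrt 2 * t) ^ 3)) / 16) t := by
    intro t
    have h := (((((hc t).fun_pow 2).const_mul 9).const_sub 4).const_mul (-(1/16))).fun_mul (hn t)
    have e2 : f2 = fun u =>
        -(1 / 16) * (4 - 9 * Real.cos (Real.sqrt 2 * u) ^ 2) * Real.sin (Real.sqrt 2 * u) :=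
      funext hf2
    rw [e2]
    refine h.congr_deriv (Eq.symm ?_)
    push_cast
    linear_combination (9/8 * Real.sqrt 2 * Real.cos (Real.sqrt 2 * t)) * hpy (Real.sqrt 2 * t)
  have df2 : ∀ t : ℝ, deriv f2 t =
      -(Real.sqrt 2 * (22 * Real.cos (Real.sqrt 2 * t) - 27 * Real.cos (Real.sqrt 2 * t) ^ 3)) / 16 :=
    fun t => (hd2 t).deriv
  -- derivative of f3
  have hd3 : ∀ t : ℝ, HasDerivAt f3
      (Real.sqrt 2 * (3 * Real.cos (Real.sqrt 2 * t) ^ 3 - 2 * Real.cos (Real.sqrt 2 * t)) / 16) t := by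
    intro t
    have h := (((hc t).fun_pow 2).const_mul (1/16)).fun_mul (hn t)
    have e3 : f3 = fun u =>
        (1 / 16) * Real.cos (Real.sqrt 2 * u) ^ 2 * Real.sin (Real.sqrt 2 * u) :=
      funext hf3
    rw [e3]
    refine h.congr_deriv (Eq.symm ?_)
    push_cast
    linear_combination (1/8 * Real.sqrt 2 * Real.cos (Real.sqrt 2 * t)) * hpy (Real.sqrt 2 * t)
  have df3 : ∀ t : ℝ, deriv f3 t =
      Real.sqrt 2 * (3 * Real.cos (Real.sqrt 2 * t) ^ 3 - 2 * Real.cos (Real.sqrt 2 * t)) / 16 :=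
    fun t => (hd3 t).deriv
  -- derivative of F
  have hdF : ∀ t : ℝ, HasDerivAt F
      (3 * Real.sqrt 2 * (3 * Real.cos (Real.sqrt 2 * t) ^ 3 - 2 * Real.cos (Real.sqrt 2 * t)) / 16) t := by
    intro t
    have h := (((hc t).fun_pow 2).const_mul (3/16)).fun_mul (hn t)
    have eF : F = fun u =>
        (3 / 16) * Real.cos (Real.sqrt 2 * u) ^ 2 * Real.sin (Real.sqrt 2 * u) :=
      funext hF
    rw [eF]
    refine h.congr_deriv (Eq.symm ?_)
    push_cast
    linear_combination (3/8 * Real.sqrt 2 * Real.cos (Real.sqrt 2 * t)) * hpy (Real.sqrt 2 * t)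
  have dF : ∀ t : ℝ, deriv F t =
      3 * Real.sqrt 2 * (3 * Real.cos (Real.sqrt 2 * t) ^ 3 - 2 * Real.cos (Real.sqrt 2 * t)) / 16 :=
    fun t => (hdF t).deriv
  refine ⟨fun t ht => ?_, ?_⟩
  · -- positivity of cos on the interval
    have hspos : (0:ℝ) < Real.sqrt 2 := by positivity
    have h1 : Real.sqrt 2 * t < Real.pi / 2 := by
      have h2 := ht.2
      have h4 : Real.sqrt 2 * (Real.pi / (2 * Real.sqrt 2)) = Real.pi / 2 := by
        field_simp
      nlinarith [mul_lt_mul_of_pos_left h2 hspos]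
    have hcpos : 0 < Real.cos (Real.sqrt 2 * t) := by
      apply Real.cos_pos_of_mem_Ioo
      constructor
      · have h5 : 0 < Real.sqrt 2 * t := mul_pos hspos ht.1
        nlinarith [Real.pi_pos]
      · exact h1
    have hf1ne : f1 t ≠ 0 := by
      rw [hf1 t]
      exact mul_ne_zero (neg_ne_zero.mpr (by positivity)) (ne_of_gt hcpos)
    -- equation 1
    have hg2 : (fun u => (deriv f2 u + f1 u / 4) * f1 u)
        = fun u => (24 * Real.cos (Real.sqrt 2 * u) ^ 2 - 27 * Real.cos (Real.sqrt 2 * u) ^ 4) / 16 := by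
      funext u
      rw [df2 u, hf1 u, h12]
      linear_combination ((24 * Real.cos (Real.sqrt 2 * u) ^ 2
        - 27 * Real.cos (Real.sqrt 2 * u) ^ 4) / 32) * hs2
    have hD2 : HasDerivAt
        (fun u => (24 * Real.cos (Real.sqrt 2 * u) ^ 2 - 27 * Real.cos (Real.sqrt 2 * u) ^ 4) / 16)
        (Real.sqrt 2 * (108 * Real.cos (Real.sqrt 2 * t) ^ 3 - 48 * Real.cos (Real.sqrt 2 * t))
          * Real.sin (Real.sqrt 2 * t) / 16) t := by
      have h := ((((hc t).fun_pow 2).const_mul 24).sub (((hc t).fun_pow 4).const_mul 27)).div_const 16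
      refine h.congr_deriv (Eq.symm ?_)
      push_cast
      ring
    have e1 : deriv (fun u => (deriv f2 u + f1 u / 4) * f1 u) t + 12 * μ * f1 t * f2 t = 0 := by
      rw [hg2, hD2.deriv, hμ, hf1 t, hf2 t, h12]
      ring
    -- equation 2
    have hg3 : (fun u => (deriv f3 u - f1 u / 4) * f1 u)
        = fun u => -(3 / 16) * Real.cos (Real.sqrt 2 * u) ^ 4 := by
      funext u
      rw [df3 u, hf1 u, h12]
      linear_combination (-(3/32) * Real.cos (Real.sqrt 2 * u) ^ 4) * hs2
    have hD3 : HasDerivAt (fun u => -(3 / 16) * Real.cos (Real.sqrt 2 * u) ^ 4)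
        (3 * Real.sqrt 2 * Real.cos (Real.sqrt 2 * t) ^ 3 * Real.sin (Real.sqrt 2 * t) / 4) t := by
      have h := ((hc t).fun_pow 4).const_mul (-(3/16))
      refine h.congr_deriv (Eq.symm ?_)
      push_cast
      ring
    have e2 : deriv (fun u => (deriv f3 u - f1 u / 4) * f1 u) t + 12 * μ * f1 t * f3 t = 0 := by
      rw [hg3, hD3.deriv, hμ, hf1 t, hf3 t, h12]
      ring
    -- equation 3
    have hgF : (fun u => deriv F u * f1 u)
        = fun u => (6 * Real.cos (Real.sqrt 2 * u) ^ 2 - 9 * Real.cos (Real.sqrt 2 * u) ^ 4) / 16 := by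
      funext u
      rw [dF u, hf1 u, h12]
      linear_combination ((6 * Real.cos (Real.sqrt 2 * u) ^ 2
        - 9 * Real.cos (Real.sqrt 2 * u) ^ 4) / 32) * hs2
    have hDF : HasDerivAt
        (fun u => (6 * Real.cos (Real.sqrt 2 * u) ^ 2 - 9 * Real.cos (Real.sqrt 2 * u) ^ 4) / 16)
        (Real.sqrt 2 * (36 * Real.cos (Real.sqrt 2 * t) ^ 3 - 12 * Real.cos (Real.sqrt 2 * t))
          * Real.sin (Real.sqrt 2 * t) / 16) t := by
      have h := ((((hc t).fun_pow 2).const_mul 6).sub (((hc t).fun_pow 4).const_mul 9)).div_const 16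
      refine h.congr_deriv (Eq.symm ?_)
      push_cast
      ring
    have hq : 4 * F t / f1 t
        = -(3 * Real.sqrt 2 / 4) * (Real.cos (Real.sqrt 2 * t) * Real.sin (Real.sqrt 2 * t)) := by
      rw [hF t, hf1 t, div_eq_iff (by rw [← hf1 t]; exact hf1ne), h12]
      linear_combination (-(3/8) * Real.cos (Real.sqrt 2 * t) ^ 2
        * Real.sin (Real.sqrt 2 * t)) * hs2
    have e3 : deriv (fun u => deriv F u * f1 u) t - 4 * F t / f1 t + 12 * μ * f1 t * F t = 0 := by
      rw [hgF, hDF.deriv, hq, hμ, hf1 t, hF t, h12]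
      ring
    -- equation 4
    have e4 : f1 t * (deriv f2 t - deriv f3 t + f1 t / 2)
        + 48 * μ * (f2 t * f3 t - F t ^ 2) = 0 := by
      rw [df2 t, df3 t, hμ, hf1 t, hf2 t, hf3 t, hF t, h12]
      linear_combination (3/4 * (Real.cos (Real.sqrt 2 * t) ^ 2 - Real.cos (Real.sqrt 2 * t) ^ 4)) * hs2
        + (-(3/2) * Real.cos (Real.sqrt 2 * t) ^ 2) * hpy (Real.sqrt 2 * t)
    -- constraint
    have e5 : 4 * F t ^ 2 -
        ((deriv F t) ^ 2 - (deriv f2 t + f1 t / 4) * (deriv f3 t - f1 t / 4)) * f1 t ^ 2 = 0 := by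
      rw [dF t, df2 t, df3 t, hf1 t, hF t, h12]
      linear_combination ((9/64) * Real.cos (Real.sqrt 2 * t) ^ 4) * hpy (Real.sqrt 2 * t)
        + (-(9/256) * Real.cos (Real.sqrt 2 * t) ^ 4 * (1 - Real.cos (Real.sqrt 2 * t) ^ 2)
            * (Real.sqrt 2 ^ 2 + 2)) * hs2
    exact ⟨⟨e1, e2, e3, e4⟩, e5⟩
  · rw [hf1 0, mul_zero, Real.cos_zero, mul_one, h12]
    linear_combination (1/8) * hs2
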